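/- (Pappus) Let F be a field and work in the affine plane F². Suppose A₁, A₂, A₃ are collinear points and B₁, B₂, B₃ are collinear points. Suppose C₁ is a point lying on both the line through A₂ and B₃ and the line through A₃ and B₂, and these two lines are distinct; C₂ lies on both the line through A₁ and B₃ and the line through A₃ and B₁, and these two lines are distinct; C₃ lies on both the line through A₁ and B₂ and the line through A₂ and B₁, and these two lines are distinct (where in each case the pairs of points involved are distinct, so each line is well defined as the affine span of the two points). Then C₁, C₂, C₃ are collinear. -/

import Mathlib

theorem pappus_span_coords {F : Type*} [Field F] {P Q X : F × F}
    (h : X ∈ affineSpan F ({P, Q} : Set (F × F))) :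
    ∃ t : F, X.1 = P.1 + t * (Q.1 - P.1) ∧ X.2 = P.2 + t * (Q.2 - P.2) := by
  rw [← vsub_vadd X P] at h
  obtain ⟨t, ht⟩ := vadd_left_mem_affineSpan_pair.1 h
  have h1 := congrArg Prod.fst ht
  have h2 := congrArg Prod.snd ht
  simp only [vsub_eq_sub, Prod.smul_fst, Prod.smul_snd, Prod.fst_sub, Prod.snd_sub,
    smul_eq_mul] at h1 h2
  exact ⟨t, by linear_combination -h1, by linear_combination -h2⟩

theorem pappus_mem_span {F : Type*} [Field F] {P Q X : F × F} (t : F)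
    (h1 : X.1 = P.1 + t * (Q.1 - P.1)) (h2 : X.2 = P.2 + t * (Q.2 - P.2)) :
    X ∈ affineSpan F ({P, Q} : Set (F × F)) := by
  rw [← vsub_vadd X P]
  refine vadd_left_mem_affineSpan_pair.2 ⟨t, ?_⟩
  ext
  · simp only [vsub_eq_sub, Prod.smul_fst, Prod.fst_sub, smul_eq_mul, h1]; ring
  · simp only [vsub_eq_sub, Prod.smul_snd, Prod.snd_sub, smul_eq_mul, h2]; ring

theorem pappus_collinear_of_det {F : Type*} [Field F] {P Q R : F × F}
    (h : (Q.1 - P.1) * (R.2 - P.2) - (Q.2 - P.2) * (R.1 - P.1) = 0) :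
    Collinear F ({P, Q, R} : Set (F × F)) := by
  by_cases hQP : Q = P
  · rw [hQP, Set.insert_idem]
    exact collinear_pair F P R
  · have h1 : Q.1 - P.1 ≠ 0 ∨ Q.2 - P.2 ≠ 0 := by
      by_contra hc
      push_neg at hc
      exact hQP (Prod.ext (sub_eq_zero.1 hc.1) (sub_eq_zero.1 hc.2))
    have hR : R ∈ affineSpan F ({P, Q} : Set (F × F)) := by
      rcases h1 with h1 | h1
      · refine pappus_mem_span ((R.1 - P.1) / (Q.1 - P.1)) (by field_simp; ring) ?_
        field_simp
        linear_combination h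
      · refine pappus_mem_span ((R.2 - P.2) / (Q.2 - P.2)) ?_ (by field_simp; ring)
        field_simp
        linear_combination -h
    have hcol := collinear_insert_of_mem_affineSpan_pair hR
    have hset : ({R, P, Q} : Set (F × F)) = {P, Q, R} := by
      ext x; simp only [Set.mem_insert_iff, Set.mem_singleton_iff]; tauto
    rwa [hset] at hcol

theorem pappus_line_eq {F : Type*} [Field F] {P Q R S C : F × F} (hPQ : P ≠ Q) (hRS : R ≠ S)
    (h1 : C ∈ affineSpan F ({P, Q} : Set (F × F))) (h2 : C ∈ affineSpan F ({R, S} : Set (F × F)))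
    (hpar : (Q.1 - P.1) * (S.2 - R.2) - (Q.2 - P.2) * (S.1 - R.1) = 0) :
    affineSpan F ({P, Q} : Set (F × F)) = affineSpan F ({R, S} : Set (F × F)) := by
  obtain ⟨a, ha1, ha2⟩ := pappus_span_coords h1
  obtain ⟨b, hb1, hb2⟩ := pappus_span_coords h2
  have hQP : Q.1 - P.1 ≠ 0 ∨ Q.2 - P.2 ≠ 0 := by
    by_contra hc
    push_neg at hc
    exact hPQ (Prod.ext (sub_eq_zero.1 hc.1).symm (sub_eq_zero.1 hc.2).symm)
  obtain ⟨l, hl1, hl2⟩ : ∃ l : F, S.1 - R.1 = l * (Q.1 - P.1) ∧ S.2 - R.2 = l * (Q.2 - P.2) := by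
    rcases hQP with hq | hq
    · refine ⟨(S.1 - R.1) / (Q.1 - P.1), by field_simp, ?_⟩
      field_simp
      linear_combination hpar
    · refine ⟨(S.2 - R.2) / (Q.2 - P.2), ?_, by field_simp⟩
      field_simp
      linear_combination -hpar
  have hl0 : l ≠ 0 := by
    intro h0
    rw [h0, zero_mul] at hl1 hl2
    exact hRS (Prod.ext (sub_eq_zero.1 hl1).symm (sub_eq_zero.1 hl2).symm)
  apply le_antisymm
  · apply affineSpan_pair_le_of_mem_of_mem
    · refine pappus_mem_span ((b * l - a) / l) ?_ ?_
      · field_simp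
        linear_combination l * (hb1 - ha1) + a * hl1
      · field_simp
        linear_combination l * (hb2 - ha2) + a * hl2
    · refine pappus_mem_span ((b * l - a + 1) / l) ?_ ?_
      · field_simp
        linear_combination l * (hb1 - ha1) + a * hl1 - hl1
      · field_simp
        linear_combination l * (hb2 - ha2) + a * hl2 - hl2
  · apply affineSpan_pair_le_of_mem_of_mem
    · exact pappus_mem_span (a - b * l) (by linear_combination ha1 - hb1 - b * hl1)
        (by linear_combination ha2 - hb2 - b * hl2)
    · exact pappus_mem_span (a - b * l + l) (by linear_combination ha1 - hb1 - b * hl1 + hl1)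
        (by linear_combination ha2 - hb2 - b * hl2 + hl2)


theorem pappus_core {F : Type*} [Field F]
    (x3 y3 x2a y2a x1b y1b x2b y2b c11 c12 c21 c22 c31 c32 g1 h1 g2 h2 g3 h3 k l m p q r s : F)
    (hx1 : c11 * (g1 - h1) = g1 * x3 - h1 * x2b)
    (hy1 : c12 * (g1 - h1) = g1 * y3 - h1 * y2b)
    (hx2 : c21 * (g2 - h2) = g2 * x3 - h2 * x1b)
    (hy2 : c22 * (g2 - h2) = g2 * y3 - h2 * y1b)
    (hx3 : c31 * (g3 - h3) = g3 * x2a - h3 * x1b)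
    (hy3 : c32 * (g3 - h3) = g3 * y2a - h3 * y1b)
    (hg1 : g1 = -(p * r * k) + p * s * k - r * m + s * m)
    (hh1 : h1 = p * s * k + p * l - q * s * k - q * l)
    (hg2 : g2 = s * m)
    (hh2 : h2 = -(q * s * k) - q * l)
    (hg3 : g3 = r * m)
    (hh3 : h3 = -(p * r * k) - p * l)
    (hD1 : (x3 - x2b) * (y2a - y2b) - (y3 - y2b) * (x2a - x2b) = p * r * k + p * l - q * r * k - q * l)
    (hD2 : (x1b - x3) * (y2a - y3) - (y1b - y3) * (x2a - x3) = -(p * l) + q * l)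
    (hD3 : (x1b - x2b) * (y2a - y2b) - (y1b - y2b) * (x2a - x2b) = p * r * k + r * m)
    (hD4 : (x3 - x2b) * (y1b - y2b) - (y3 - y2b) * (x1b - x2b) = -(q * r * k) - r * m)
    (hd1 : g1 - h1 ≠ 0) (hd2 : g2 - h2 ≠ 0) (hd3 : g3 - h3 ≠ 0) :
    (c21 - c11) * (c32 - c12) - (c22 - c12) * (c31 - c11) = 0 := by
  have hT : ((c21 - c11) * (c32 - c12) - (c22 - c12) * (c31 - c11)) *
      ((g1 - h1) * ((g2 - h2) * (g3 - h3))) =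
      -(h1 * g2 * g3 * ((x3 - x2b) * (y2a - y2b) - (y3 - y2b) * (x2a - x2b)))
      - g1 * h2 * g3 * ((x1b - x3) * (y2a - y3) - (y1b - y3) * (x2a - x3))
      + h1 * h2 * g3 * ((x1b - x2b) * (y2a - y2b) - (y1b - y2b) * (x2a - x2b))
      + h1 * g2 * h3 * ((x3 - x2b) * (y1b - y2b) - (y3 - y2b) * (x1b - x2b)) := by
    linear_combination
      ((c22 - c32) * ((g2 - h2) * (g3 - h3))) * hx1
      + ((c31 - c21) * ((g2 - h2) * (g3 - h3))) * hy1
      + ((g3 - h3) * (c32 * (g1 - h1) - g1 * y3 + h1 * y2b)) * hx2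
      + ((g3 - h3) * (-(c31 * (g1 - h1)) + g1 * x3 - h1 * x2b)) * hy2
      + (y3 * (h1 * g2 - g1 * h2) + y2b * (h1 * h2 - h1 * g2) + y1b * (g1 * h2 - h1 * h2)) * hx3
      + (x3 * (g1 * h2 - h1 * g2) + x2b * (h1 * g2 - h1 * h2) + x1b * (h1 * h2 - g1 * h2)) * hy3
  rw [hD1, hD2, hD3, hD4, hg1, hh1, hg2, hh2, hg3, hh3] at hT
  have hbig : ((c21 - c11) * (c32 - c12) - (c22 - c12) * (c31 - c11)) *
      ((g1 - h1) * ((g2 - h2) * (g3 - h3))) = 0 := by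
    rw [hg1, hh1, hg2, hh2, hg3, hh3]
    linear_combination hT
  exact (mul_eq_zero.1 hbig).resolve_right
    (mul_ne_zero hd1 (mul_ne_zero hd2 hd3))

/-- Key scalar computation for Pappus' theorem, with both families of points
parametrized along their lines. -/
theorem pappus_key {F : Type*} [Field F]
    (a1 a2 u1 u2 p q b1 b2 w1 w2 r s c11 c12 c21 c22 c31 c32 s1 t1 s2 t2 s3 t3 : F)
    (e1x : c11 = (a1 + p * u1) + s1 * ((b1 + s * w1) - (a1 + p * u1))) (e1y : c12 = (a2 + p * u2) + s1 * ((b2 + s * w2) - (a2 + p * u2)))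
    (f1x : c11 = (a1 + q * u1) + t1 * ((b1 + r * w1) - (a1 + q * u1))) (f1y : c12 = (a2 + q * u2) + t1 * ((b2 + r * w2) - (a2 + q * u2)))
    (e2x : c21 = a1 + s2 * ((b1 + s * w1) - a1)) (e2y : c22 = a2 + s2 * ((b2 + s * w2) - a2))
    (f2x : c21 = (a1 + q * u1) + t2 * (b1 - (a1 + q * u1))) (f2y : c22 = (a2 + q * u2) + t2 * (b2 - (a2 + q * u2)))
    (e3x : c31 = a1 + s3 * ((b1 + r * w1) - a1)) (e3y : c32 = a2 + s3 * ((b2 + r * w2) - a2))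
    (f3x : c31 = (a1 + p * u1) + t3 * (b1 - (a1 + p * u1))) (f3y : c32 = (a2 + p * u2) + t3 * (b2 - (a2 + p * u2)))
    (hd1 : (((b1 + s * w1) - (a1 + p * u1)) * ((b2 + r * w2) - (a2 + q * u2)) - ((b2 + s * w2) - (a2 + p * u2)) * ((b1 + r * w1) - (a1 + q * u1))) ≠ 0)
    (hd2 : (((b1 + s * w1) - a1) * (b2 - (a2 + q * u2)) - ((b2 + s * w2) - a2) * (b1 - (a1 + q * u1))) ≠ 0)
    (hd3 : (((b1 + r * w1) - a1) * (b2 - (a2 + p * u2)) - ((b2 + r * w2) - a2) * (b1 - (a1 + p * u1))) ≠ 0)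
    : (c21 - c11) * (c32 - c12) - (c22 - c12) * (c31 - c11) = 0 := by
  have hm1 : s1 * (((b1 + s * w1) - (a1 + p * u1)) * ((b2 + r * w2) - (a2 + q * u2)) - ((b2 + s * w2) - (a2 + p * u2)) * ((b1 + r * w1) - (a1 + q * u1))) = (((a1 + q * u1) - (a1 + p * u1)) * ((b2 + r * w2) - (a2 + q * u2)) - ((a2 + q * u2) - (a2 + p * u2)) * ((b1 + r * w1) - (a1 + q * u1))) := by
    linear_combination ((b2 + r * w2) - (a2 + q * u2)) * (f1x - e1x) + ((b1 + r * w1) - (a1 + q * u1)) * (e1y - f1y)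
  have hx1 : c11 * ((((b1 + s * w1) - (a1 + p * u1)) * ((b2 + r * w2) - (a2 + p * u2)) - ((b2 + s * w2) - (a2 + p * u2)) * ((b1 + r * w1) - (a1 + p * u1))) - (((b1 + s * w1) - (a1 + p * u1)) * ((a2 + q * u2) - (a2 + p * u2)) - ((b2 + s * w2) - (a2 + p * u2)) * ((a1 + q * u1) - (a1 + p * u1)))) = (((b1 + s * w1) - (a1 + p * u1)) * ((b2 + r * w2) - (a2 + p * u2)) - ((b2 + s * w2) - (a2 + p * u2)) * ((b1 + r * w1) - (a1 + p * u1))) * (a1 + q * u1) - (((b1 + s * w1) - (a1 + p * u1)) * ((a2 + q * u2) - (a2 + p * u2)) - ((b2 + s * w2) - (a2 + p * u2)) * ((a1 + q * u1) - (a1 + p * u1))) * (b1 + r * w1) := by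
    linear_combination (((b1 + s * w1) - (a1 + p * u1)) * ((b2 + r * w2) - (a2 + q * u2)) - ((b2 + s * w2) - (a2 + p * u2)) * ((b1 + r * w1) - (a1 + q * u1))) * e1x + ((b1 + s * w1) - (a1 + p * u1)) * hm1
  have hy1 : c12 * ((((b1 + s * w1) - (a1 + p * u1)) * ((b2 + r * w2) - (a2 + p * u2)) - ((b2 + s * w2) - (a2 + p * u2)) * ((b1 + r * w1) - (a1 + p * u1))) - (((b1 + s * w1) - (a1 + p * u1)) * ((a2 + q * u2) - (a2 + p * u2)) - ((b2 + s * w2) - (a2 + p * u2)) * ((a1 + q * u1) - (a1 + p * u1)))) = (((b1 + s * w1) - (a1 + p * u1)) * ((b2 + r * w2) - (a2 + p * u2)) - ((b2 + s * w2) - (a2 + p * u2)) * ((b1 + r * w1) - (a1 + p * u1))) * (a2 + q * u2) - (((b1 + s * w1) - (a1 + p * u1)) * ((a2 + q * u2) - (a2 + p * u2)) - ((b2 + s * w2) - (a2 + p * u2)) * ((a1 + q * u1) - (a1 + p * u1))) * (b2 + r * w2) := by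
    linear_combination (((b1 + s * w1) - (a1 + p * u1)) * ((b2 + r * w2) - (a2 + q * u2)) - ((b2 + s * w2) - (a2 + p * u2)) * ((b1 + r * w1) - (a1 + q * u1))) * e1y + ((b2 + s * w2) - (a2 + p * u2)) * hm1
  have hm2 : s2 * (((b1 + s * w1) - a1) * (b2 - (a2 + q * u2)) - ((b2 + s * w2) - a2) * (b1 - (a1 + q * u1))) = (((a1 + q * u1) - a1) * (b2 - (a2 + q * u2)) - ((a2 + q * u2) - a2) * (b1 - (a1 + q * u1))) := by
    linear_combination (b2 - (a2 + q * u2)) * (f2x - e2x) + (b1 - (a1 + q * u1)) * (e2y - f2y)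
  have hx2 : c21 * ((((b1 + s * w1) - a1) * (b2 - a2) - ((b2 + s * w2) - a2) * (b1 - a1)) - (((b1 + s * w1) - a1) * ((a2 + q * u2) - a2) - ((b2 + s * w2) - a2) * ((a1 + q * u1) - a1))) = (((b1 + s * w1) - a1) * (b2 - a2) - ((b2 + s * w2) - a2) * (b1 - a1)) * (a1 + q * u1) - (((b1 + s * w1) - a1) * ((a2 + q * u2) - a2) - ((b2 + s * w2) - a2) * ((a1 + q * u1) - a1)) * b1 := by
    linear_combination (((b1 + s * w1) - a1) * (b2 - (a2 + q * u2)) - ((b2 + s * w2) - a2) * (b1 - (a1 + q * u1))) * e2x + ((b1 + s * w1) - a1) * hm2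
  have hy2 : c22 * ((((b1 + s * w1) - a1) * (b2 - a2) - ((b2 + s * w2) - a2) * (b1 - a1)) - (((b1 + s * w1) - a1) * ((a2 + q * u2) - a2) - ((b2 + s * w2) - a2) * ((a1 + q * u1) - a1))) = (((b1 + s * w1) - a1) * (b2 - a2) - ((b2 + s * w2) - a2) * (b1 - a1)) * (a2 + q * u2) - (((b1 + s * w1) - a1) * ((a2 + q * u2) - a2) - ((b2 + s * w2) - a2) * ((a1 + q * u1) - a1)) * b2 := by
    linear_combination (((b1 + s * w1) - a1) * (b2 - (a2 + q * u2)) - ((b2 + s * w2) - a2) * (b1 - (a1 + q * u1))) * e2y + ((b2 + s * w2) - a2) * hm2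
  have hm3 : s3 * (((b1 + r * w1) - a1) * (b2 - (a2 + p * u2)) - ((b2 + r * w2) - a2) * (b1 - (a1 + p * u1))) = (((a1 + p * u1) - a1) * (b2 - (a2 + p * u2)) - ((a2 + p * u2) - a2) * (b1 - (a1 + p * u1))) := by
    linear_combination (b2 - (a2 + p * u2)) * (f3x - e3x) + (b1 - (a1 + p * u1)) * (e3y - f3y)
  have hx3 : c31 * ((((b1 + r * w1) - a1) * (b2 - a2) - ((b2 + r * w2) - a2) * (b1 - a1)) - (((b1 + r * w1) - a1) * ((a2 + p * u2) - a2) - ((b2 + r * w2) - a2) * ((a1 + p * u1) - a1))) = (((b1 + r * w1) - a1) * (b2 - a2) - ((b2 + r * w2) - a2) * (b1 - a1)) * (a1 + p * u1) - (((b1 + r * w1) - a1) * ((a2 + p * u2) - a2) - ((b2 + r * w2) - a2) * ((a1 + p * u1) - a1)) * b1 := by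
    linear_combination (((b1 + r * w1) - a1) * (b2 - (a2 + p * u2)) - ((b2 + r * w2) - a2) * (b1 - (a1 + p * u1))) * e3x + ((b1 + r * w1) - a1) * hm3
  have hy3 : c32 * ((((b1 + r * w1) - a1) * (b2 - a2) - ((b2 + r * w2) - a2) * (b1 - a1)) - (((b1 + r * w1) - a1) * ((a2 + p * u2) - a2) - ((b2 + r * w2) - a2) * ((a1 + p * u1) - a1))) = (((b1 + r * w1) - a1) * (b2 - a2) - ((b2 + r * w2) - a2) * (b1 - a1)) * (a2 + p * u2) - (((b1 + r * w1) - a1) * ((a2 + p * u2) - a2) - ((b2 + r * w2) - a2) * ((a1 + p * u1) - a1)) * b2 := by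
    linear_combination (((b1 + r * w1) - a1) * (b2 - (a2 + p * u2)) - ((b2 + r * w2) - a2) * (b1 - (a1 + p * u1))) * e3y + ((b2 + r * w2) - a2) * hm3
  refine pappus_core (a1 + q * u1) (a2 + q * u2) (a1 + p * u1) (a2 + p * u2) b1 b2 (b1 + r * w1) (b2 + r * w2)
    c11 c12 c21 c22 c31 c32
    (((b1 + s * w1) - (a1 + p * u1)) * ((b2 + r * w2) - (a2 + p * u2)) - ((b2 + s * w2) - (a2 + p * u2)) * ((b1 + r * w1) - (a1 + p * u1))) (((b1 + s * w1) - (a1 + p * u1)) * ((a2 + q * u2) - (a2 + p * u2)) - ((b2 + s * w2) - (a2 + p * u2)) * ((a1 + q * u1) - (a1 + p * u1))) (((b1 + s * w1) - a1) * (b2 - a2) - ((b2 + s * w2) - a2) * (b1 - a1)) (((b1 + s * w1) - a1) * ((a2 + q * u2) - a2) - ((b2 + s * w2) - a2) * ((a1 + q * u1) - a1)) (((b1 + r * w1) - a1) * (b2 - a2) - ((b2 + r * w2) - a2) * (b1 - a1)) (((b1 + r * w1) - a1) * ((a2 + p * u2) - a2) - ((b2 + r * w2) - a2) * ((a1 +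 p * u1) - a1))
    (u1 * w2 - u2 * w1) (u1 * (b2 - a2) - u2 * (b1 - a1)) (w1 * (b2 - a2) - w2 * (b1 - a1)) p q r s
    hx1 hy1 hx2 hy2 hx3 hy3
    (by ring) (by ring) (by ring) (by ring) (by ring) (by ring)
    (by ring) (by ring) (by ring) (by ring)
    (fun hh => hd1 (by linear_combination hh))
    (fun hh => hd2 (by linear_combination hh))
    (fun hh => hd3 (by linear_combination hh))

/-- Pappus' theorem in the affine plane `F²` over a field `F`. -/
theorem pappus_affine {F : Type*} [Field F]
    (A₁ A₂ A₃ B₁ B₂ B₃ C₁ C₂ C₃ : F × F)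
    (hA : Collinear F {A₁, A₂, A₃}) (hB : Collinear F {B₁, B₂, B₃})
    (h23 : A₂ ≠ B₃) (h32 : A₃ ≠ B₂)
    (hl1 : affineSpan F {A₂, B₃} ≠ affineSpan F {A₃, B₂})
    (hC₁ : C₁ ∈ affineSpan F ({A₂, B₃} : Set (F × F)) ∧
           C₁ ∈ affineSpan F ({A₃, B₂} : Set (F × F)))
    (h13 : A₁ ≠ B₃) (h31 : A₃ ≠ B₁)
    (hl2 : affineSpan F {A₁, B₃} ≠ affineSpan F {A₃, B₁})
    (hC₂ : C₂ ∈ affineSpan F ({A₁, B₃} : Set (F × F)) ∧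
           C₂ ∈ affineSpan F ({A₃, B₁} : Set (F × F)))
    (h12 : A₁ ≠ B₂) (h21 : A₂ ≠ B₁)
    (hl3 : affineSpan F {A₁, B₂} ≠ affineSpan F {A₂, B₁})
    (hC₃ : C₃ ∈ affineSpan F ({A₁, B₂} : Set (F × F)) ∧
           C₃ ∈ affineSpan F ({A₂, B₁} : Set (F × F))) :
    Collinear F {C₁, C₂, C₃} := by
  obtain ⟨u, hu⟩ := (collinear_iff_of_mem
    (show A₁ ∈ ({A₁, A₂, A₃} : Set (F × F)) by simp)).1 hA
  obtain ⟨p, hp⟩ := hu A₂ (by simp)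
  obtain ⟨q, hq⟩ := hu A₃ (by simp)
  obtain ⟨w, hw⟩ := (collinear_iff_of_mem
    (show B₁ ∈ ({B₁, B₂, B₃} : Set (F × F)) by simp)).1 hB
  obtain ⟨r, hr⟩ := hw B₂ (by simp)
  obtain ⟨s, hs⟩ := hw B₃ (by simp)
  subst hp hq hr hs
  obtain ⟨s1, he1x, he1y⟩ := pappus_span_coords hC₁.1
  obtain ⟨t1, hf1x, hf1y⟩ := pappus_span_coords hC₁.2
  obtain ⟨s2, he2x, he2y⟩ := pappus_span_coords hC₂.1
  obtain ⟨t2, hf2x, hf2y⟩ := pappus_span_coords hC₂.2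
  obtain ⟨s3, he3x, he3y⟩ := pappus_span_coords hC₃.1
  obtain ⟨t3, hf3x, hf3y⟩ := pappus_span_coords hC₃.2
  simp only [vadd_eq_add, Prod.fst_add, Prod.snd_add, Prod.smul_fst, Prod.smul_snd,
    smul_eq_mul] at he1x he1y hf1x hf1y he2x he2y hf2x hf2y he3x he3y hf3x hf3y
  have hd1 : ((B₁.1 + s * w.1) - (A₁.1 + p * u.1)) * ((B₁.2 + r * w.2) - (A₁.2 + q * u.2)) -
      ((B₁.2 + s * w.2) - (A₁.2 + p * u.2)) * ((B₁.1 + r * w.1) - (A₁.1 + q * u.1)) ≠ 0 := by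
    intro hh
    refine hl1 (pappus_line_eq h23 h32 hC₁.1 hC₁.2 ?_)
    simp only [vadd_eq_add, Prod.fst_add, Prod.snd_add, Prod.smul_fst, Prod.smul_snd,
      smul_eq_mul]
    linear_combination hh
  have hd2 : ((B₁.1 + s * w.1) - A₁.1) * (B₁.2 - (A₁.2 + q * u.2)) -
      ((B₁.2 + s * w.2) - A₁.2) * (B₁.1 - (A₁.1 + q * u.1)) ≠ 0 := by
    intro hh
    refine hl2 (pappus_line_eq h13 h31 hC₂.1 hC₂.2 ?_)
    simp only [vadd_eq_add, Prod.fst_add, Prod.snd_add, Prod.smul_fst, Prod.smul_snd,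
      smul_eq_mul]
    linear_combination hh
  have hd3 : ((B₁.1 + r * w.1) - A₁.1) * (B₁.2 - (A₁.2 + p * u.2)) -
      ((B₁.2 + r * w.2) - A₁.2) * (B₁.1 - (A₁.1 + p * u.1)) ≠ 0 := by
    intro hh
    refine hl3 (pappus_line_eq h12 h21 hC₃.1 hC₃.2 ?_)
    simp only [vadd_eq_add, Prod.fst_add, Prod.snd_add, Prod.smul_fst, Prod.smul_snd,
      smul_eq_mul]
    linear_combination hh
  refine pappus_collinear_of_det (pappus_key A₁.1 A₁.2 u.1 u.2 p q B₁.1 B₁.2 w.1 w.2 r s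
    C₁.1 C₁.2 C₂.1 C₂.2 C₃.1 C₃.2 s1 t1 s2 t2 s3 t3
    (by linear_combination he1x) (by linear_combination he1y)
    (by linear_combination hf1x) (by linear_combination hf1y)
    (by linear_combination he2x) (by linear_combination he2y)
    (by linear_combination hf2x) (by linear_combination hf2y)
    (by linear_combination he3x) (by linear_combination he3y)
    (by linear_combination hf3x) (by linear_combination hf3y)
    hd1 hd2 hd3)
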